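/- For every real p ≥ 0, every λ ∈ (0,1], and every z > -1, one has p·|z| ≤ λ·h*(p) + (1/λ)·h(z), where h(z) = (1+z)·log(1+z) − z and h*(p) = e^p − p − 1. -/

import Mathlib

open Real

/-- Young's inequality for `h` and `h*` at nonnegative arguments. -/
lemma young_aux (p x : ℝ) (hx : 0 ≤ x) :
    p * x ≤ (Real.exp p - p - 1) + ((1 + x) * Real.log (1 + x) - x) := by
  have h1x : (0:ℝ) < 1 + x := by linarith
  have hL : Real.exp (Real.log (1 + x)) = 1 + x := Real.exp_log h1x
  have key : (1 + x) * (1 + (p - Real.log (1 + x))) ≤ Real.exp p := by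
    have := Real.add_one_le_exp (p - Real.log (1 + x))
    calc (1 + x) * (1 + (p - Real.log (1 + x)))
        ≤ (1 + x) * Real.exp (p - Real.log (1 + x)) := by nlinarith
      _ = Real.exp (Real.log (1 + x)) * Real.exp (p - Real.log (1 + x)) := by rw [hL]
      _ = Real.exp p := by rw [← Real.exp_add]; ring_nf
  nlinarith [key]

/-- Scaling: `h*(l*p) ≤ l^2 * h*(p)`. -/
lemma hstar_scale (l p : ℝ) (hl0 : 0 < l) (hl1 : l ≤ 1) (hp : 0 ≤ p) :
    Real.exp (l * p) - l * p - 1 ≤ l ^ 2 * (Real.exp p - p - 1) := by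
  set f : ℝ → ℝ := fun q => l ^ 2 * (Real.exp q - q - 1) - (Real.exp (l * q) - l * q - 1) with hf
  have hderiv : ∀ q : ℝ, HasDerivAt f (l ^ 2 * (Real.exp q - 1) - (l * Real.exp (l * q) - l)) q := by
    intro q
    have d1 : HasDerivAt (fun q : ℝ => Real.exp q - q - 1) (Real.exp q - 1) q := by
      simpa using ((Real.hasDerivAt_exp q).sub (hasDerivAt_id q)).sub_const 1
    have d2 : HasDerivAt (fun q : ℝ => l * q) l q := by
      simpa using (hasDerivAt_id q).const_mul l
    have d3 : HasDerivAt (fun q : ℝ => Real.exp (l * q)) (Real.exp (l * q) * l) q :=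
      (Real.hasDerivAt_exp (l * q)).comp q d2
    have d4 : HasDerivAt (fun q : ℝ => Real.exp (l * q) - l * q - 1)
        (Real.exp (l * q) * l - l) q := by
      simpa using (d3.sub d2).sub_const 1
    have := (d1.const_mul (l ^ 2)).sub d4
    convert this using 1
    all_goals first | rfl | ring
  have hmono : Monotone f := by
    apply monotone_of_deriv_nonneg (fun q => (hderiv q).differentiableAt)
    intro q
    rw [(hderiv q).deriv]
    have hconv : Real.exp (l * q) ≤ (1 - l) * Real.exp 0 + l * Real.exp q := by
      have := convexOn_exp.2 (Set.mem_univ (0:ℝ)) (Set.mem_univ q)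
        (by linarith : (0:ℝ) ≤ 1 - l) (le_of_lt hl0) (by ring)
      simpa using this
    rw [Real.exp_zero] at hconv
    nlinarith
  have h0 : f 0 = 0 := by simp [hf]
  have := hmono hp
  rw [h0] at this
  simp only [hf] at this
  linarith

/-- Symmetry: `h(x) ≤ h(-x)` for `0 ≤ x < 1`. -/
lemma h_sym (x : ℝ) (hx0 : 0 ≤ x) (hx1 : x < 1) :
    (1 + x) * Real.log (1 + x) - x ≤ (1 - x) * Real.log (1 - x) + x := by
  set g : ℝ → ℝ := fun t => (1 - t) * Real.log (1 - t) + t - ((1 + t) * Real.log (1 + t) - t)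
    with hg
  have hderiv : ∀ t : ℝ, -1 < t → t < 1 →
      HasDerivAt g (-(Real.log (1 - t)) - Real.log (1 + t)) t := by
    intro t ht1 ht2
    have h1t : (0:ℝ) < 1 - t := by linarith
    have h1t' : (0:ℝ) < 1 + t := by linarith
    have da : HasDerivAt (fun t : ℝ => 1 - t) (-1) t := by
      simpa using (hasDerivAt_id t).const_sub 1
    have db : HasDerivAt (fun t : ℝ => Real.log (1 - t)) (1 / (1 - t) * -1) t := by
      have := (Real.hasDerivAt_log (ne_of_gt h1t)).comp t da
      simpa [Function.comp_def, one_div] using this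
    have dc : HasDerivAt (fun t : ℝ => (1 - t) * Real.log (1 - t))
        ((-1) * Real.log (1 - t) + (1 - t) * (1 / (1 - t) * -1)) t := da.mul db
    have da' : HasDerivAt (fun t : ℝ => 1 + t) 1 t := by
      simpa using (hasDerivAt_id t).const_add 1
    have db' : HasDerivAt (fun t : ℝ => Real.log (1 + t)) (1 / (1 + t) * 1) t := by
      have := (Real.hasDerivAt_log (ne_of_gt h1t')).comp t da'
      simpa [Function.comp_def, one_div] using this
    have dc' : HasDerivAt (fun t : ℝ => (1 + t) * Real.log (1 + t))
        (1 * Real.log (1 + t) + (1 + t) * (1 / (1 + t) * 1)) t := da'.mul db'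
    have := (dc.add (hasDerivAt_id t)).sub (dc'.sub (hasDerivAt_id t))
    convert this using 1
    all_goals first | rfl | field_simp
    all_goals ring
  have hmono : MonotoneOn g (Set.Icc 0 x) := by
    apply monotoneOn_of_deriv_nonneg (convex_Icc 0 x)
    · intro t ht
      have h1 : -1 < t := by have := ht.1; linarith
      have h2 : t < 1 := by have := ht.2; linarith
      exact (hderiv t h1 h2).continuousAt.continuousWithinAt
    · intro t ht
      rw [interior_Icc] at ht
      have h1 : -1 < t := by have := ht.1; linarith
      have h2 : t < 1 := by have := ht.2; linarith
      exact (hderiv t h1 h2).differentiableAt.differentiableWithinAt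
    · intro t ht
      rw [interior_Icc] at ht
      have h1 : (0:ℝ) < t := ht.1
      have h2 : t < 1 := lt_trans ht.2 hx1
      rw [(hderiv t (by linarith) h2).deriv]
      have hprod : Real.log (1 - t) + Real.log (1 + t) ≤ 0 := by
        rw [← Real.log_mul (by linarith : (1:ℝ) - t ≠ 0) (by linarith : (1:ℝ) + t ≠ 0)]
        apply Real.log_nonpos
        · nlinarith
        · nlinarith
      linarith
  have h0 : g 0 = 0 := by simp [hg]
  have := hmono (Set.left_mem_Icc.2 hx0) (Set.mem_Icc.2 ⟨hx0, le_refl x⟩) hx0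
  rw [h0] at this
  simp only [hg] at this
  linarith

/-- Weighted Young for nonnegative `x`. -/
lemma weighted_young_nonneg (p l x : ℝ) (hp : 0 ≤ p) (hl0 : 0 < l) (hl1 : l ≤ 1)
    (hx : 0 ≤ x) :
    p * x ≤ l * (Real.exp p - p - 1) + (1 / l) * ((1 + x) * Real.log (1 + x) - x) := by
  have hlp : 0 ≤ l * p := mul_nonneg hl0.le hp
  have hy := young_aux (l * p) x hx
  have hs := hstar_scale l p hl0 hl1 hp
  have key : (l * p) * x ≤ l ^ 2 * (Real.exp p - p - 1) + ((1 + x) * Real.log (1 + x) - x) := by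
    linarith
  have hinv : 0 < 1 / l := by positivity
  have := mul_le_mul_of_nonneg_left key hinv.le
  calc p * x = (1 / l) * ((l * p) * x) := by field_simp
    _ ≤ (1 / l) * (l ^ 2 * (Real.exp p - p - 1) + ((1 + x) * Real.log (1 + x) - x)) := this
    _ = l * (Real.exp p - p - 1) + (1 / l) * ((1 + x) * Real.log (1 + x) - x) := by
        field_simp

/-- Weighted Young inequality: for `p ≥ 0`, `λ ∈ (0,1]`, and `z > -1`,
`p * |z| ≤ λ * h* p + (1/λ) * h z`, where `h z = (1+z)*log(1+z) - z` and
`h* p = exp p - p - 1`. -/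
theorem weighted_young_inequality (p l z : ℝ) (hp : 0 ≤ p) (hl0 : 0 < l) (hl1 : l ≤ 1)
    (hz : -1 < z) :
    p * |z| ≤ l * (Real.exp p - p - 1) + (1 / l) * ((1 + z) * Real.log (1 + z) - z) := by
  rcases le_or_gt 0 z with h | h
  · rw [abs_of_nonneg h]
    exact weighted_young_nonneg p l z hp hl0 hl1 h
  · rw [abs_of_neg h]
    set x := -z with hxdef
    have hx0 : 0 ≤ x := by simp [hxdef]; linarith
    have hx1 : x < 1 := by simp [hxdef]; linarith
    have h1 := weighted_young_nonneg p l x hp hl0 hl1 hx0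
    have h2 := h_sym x hx0 hx1
    have hinv : (0:ℝ) < 1 / l := by positivity
    have h3 : (1 / l) * ((1 + x) * Real.log (1 + x) - x)
        ≤ (1 / l) * ((1 - x) * Real.log (1 - x) + x) := by
      exact mul_le_mul_of_nonneg_left h2 hinv.le
    have heq : (1 + z) * Real.log (1 + z) - z = (1 - x) * Real.log (1 - x) + x := by
      rw [hxdef]; ring_nf
    rw [heq]
    linarith
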